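/- Let R = ℚ[q^{±1}, t^{±1}] and let I(n) be the ideal of R generated by the polynomials [n choose n-d]'_{q,t} for all divisors d of n. Then I(n) equals the product of the ideals I_{i,d} = (φ_d(q), q^i t + 1) over all divisors d of n and 0 ≤ i ≤ d-2, together with the principal ideal I_{n-1} = (q^{n-1} t + 1); moreover these ideals are pairwise comaximal. -/

import Mathlib

open Polynomial Finset

/-- The q-analog `[m]_q = 1 + q + ⋯ + q^{m-1}` as a polynomial over `ℚ`. -/
noncomputable def qAnalog (m : ℕ) : Polynomial ℚ := ∑ i ∈ Finset.range m, X ^ i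

/-- The q-factorial `[m]_q! = ∏_{i=1}^m [i]_q`. -/
noncomputable def qFactorial (m : ℕ) : Polynomial ℚ :=
  ∏ i ∈ Finset.range m, qAnalog (i + 1)

/-- The Gaussian binomial coefficient `[n choose k]_q`. -/
noncomputable def qBinom (n k : ℕ) : Polynomial ℚ :=
  qFactorial n /ₘ (qFactorial k * qFactorial (n - k))

/-- The ring `R = ℚ[q^{±1}, t^{±1}]`, modelled as Laurent polynomials in `t` with
coefficients Laurent polynomials in `q`. -/
noncomputable abbrev LaurentQT : Type := LaurentPolynomial (LaurentPolynomial ℚ)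

/-- The variable `q` of `R = ℚ[q^{±1}, t^{±1}]`. -/
noncomputable def qv : LaurentQT := LaurentPolynomial.C (LaurentPolynomial.T 1)

/-- The variable `t` of `R = ℚ[q^{±1}, t^{±1}]`. -/
noncomputable def tv : LaurentQT := LaurentPolynomial.T 1

/-- The (q,t)-binomial `[n choose i]'_{q,t} = [n choose i]_q · ∏_{j=i}^{n-1}(1 + t q^j)`. -/
noncomputable def qtBinom' (n i : ℕ) : LaurentQT :=
  aeval qv (qBinom n i) * ∏ j ∈ Finset.Ico i n, (1 + tv * qv ^ j)

/-- The ideal `I_{i,d} = (φ_d(q), q^i t + 1)`. -/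
noncomputable def idealId (d i : ℕ) : Ideal LaurentQT :=
  Ideal.span {(aeval qv (cyclotomic d ℚ) : LaurentQT), qv ^ i * tv + 1}


lemma qAnalog_eq {m : ℕ} (hm : 0 < m) :
    qAnalog m = ∏ c ∈ m.divisors.erase 1, cyclotomic c ℚ :=
  (prod_cyclotomic_eq_geom_sum hm ℚ).symm

lemma filter_dvd_Icc (m : ℕ) :
    (Finset.Icc 2 m).filter (· ∣ m) = m.divisors.erase 1 := by
  ext c
  simp only [mem_filter, mem_Icc, mem_erase, Nat.mem_divisors]
  constructor
  · rintro ⟨⟨h2, hm⟩, hdvd⟩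
    exact ⟨by omega, hdvd, by omega⟩
  · rintro ⟨h1, hdvd, hm⟩
    have hc0 : c ≠ 0 := by rintro rfl; exact hm (Nat.eq_zero_of_zero_dvd hdvd)
    exact ⟨⟨by omega, Nat.le_of_dvd (Nat.pos_of_ne_zero hm) hdvd⟩, hdvd⟩

lemma qFactorial_eq (m : ℕ) :
    qFactorial m = ∏ c ∈ Finset.Icc 2 m, cyclotomic c ℚ ^ (m / c) := by
  induction m with
  | zero => simp [qFactorial]
  | succ m ih =>
    have h1 : qFactorial (m + 1) = qFactorial m * qAnalog (m + 1) := by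
      rw [qFactorial, qFactorial, Finset.prod_range_succ]
    have h2 : ∀ c ∈ Finset.Icc 2 (m + 1), cyclotomic c ℚ ^ ((m+1) / c)
        = cyclotomic c ℚ ^ (m / c) * (if c ∣ m + 1 then cyclotomic c ℚ else 1) := by
      intro c _
      rw [Nat.succ_div, pow_add]
      by_cases h : c ∣ m + 1 <;> simp [h]
    rw [Finset.prod_congr rfl h2, Finset.prod_mul_distrib, ← Finset.prod_filter,
      filter_dvd_Icc, h1, ih, ← qAnalog_eq (Nat.succ_pos m)]
    congr 1
    refine Finset.prod_subset (Finset.Icc_subset_Icc_right (Nat.le_succ m)) ?_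
    intro c hc hc'
    simp only [mem_Icc] at hc hc'
    have : m / c = 0 := Nat.div_eq_of_lt (by omega)
    rw [this, pow_zero]

lemma nat_div_add_div_le (a b c : ℕ) : a / c + b / c ≤ (a + b) / c := by
  rcases Nat.eq_zero_or_pos c with rfl | hc
  · simp
  · rw [Nat.le_div_iff_mul_le hc, add_mul]
    exact add_le_add (Nat.div_mul_le_self a c) (Nat.div_mul_le_self b c)

lemma qAnalog_monic {m : ℕ} (hm : 0 < m) : (qAnalog m).Monic := by
  rw [qAnalog_eq hm]
  exact monic_prod_of_monic _ _ fun c _ => cyclotomic.monic c ℚ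

lemma qFactorial_monic (m : ℕ) : (qFactorial m).Monic :=
  monic_prod_of_monic _ _ fun i _ => qAnalog_monic (Nat.succ_pos i)

lemma qBinom_eq {n k : ℕ} (h : k ≤ n) :
    qBinom n k = ∏ c ∈ Finset.Icc 2 n, cyclotomic c ℚ ^ (n / c - k / c - (n - k) / c) := by
  have key : ∀ m, m ≤ n → qFactorial m = ∏ c ∈ Finset.Icc 2 n, cyclotomic c ℚ ^ (m / c) := by
    intro m hm
    rw [qFactorial_eq]
    refine Finset.prod_subset (Finset.Icc_subset_Icc_right hm) ?_
    intro c hc hc'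
    simp only [mem_Icc] at hc hc'
    have : m / c = 0 := Nat.div_eq_of_lt (by omega)
    rw [this, pow_zero]
  have hfact : qFactorial n = (qFactorial k * qFactorial (n - k)) *
      ∏ c ∈ Finset.Icc 2 n, cyclotomic c ℚ ^ (n / c - k / c - (n - k) / c) := by
    rw [key n le_rfl, key k h, key (n - k) (Nat.sub_le n k), ← Finset.prod_mul_distrib,
      ← Finset.prod_mul_distrib]
    refine Finset.prod_congr rfl fun c _ => ?_
    rw [← pow_add, ← pow_add]
    congr 1
    have h1 : k / c + (n - k) / c ≤ n / c := by
      have := nat_div_add_div_le k (n - k) c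
      rwa [Nat.add_sub_cancel' h] at this
    omega
  have hM : (qFactorial k * qFactorial (n - k)).Monic :=
    (qFactorial_monic k).mul (qFactorial_monic (n - k))
  rw [qBinom, hfact, divByMonic_eq_div _ hM, mul_div_cancel_left₀ _ hM.ne_zero]

lemma qBinom_pred {n : ℕ} (hn : 0 < n) : qBinom n (n - 1) = qAnalog n := by
  rw [qBinom_eq (Nat.sub_le n 1), qAnalog_eq hn, ← filter_dvd_Icc, Finset.prod_filter]
  refine Finset.prod_congr rfl fun c hc => ?_
  simp only [mem_Icc] at hc
  have h1 : 1 / c = 0 := Nat.div_eq_of_lt (by omega)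
  have h2 : n - (n - 1) = 1 := by omega
  rw [h2, h1]
  have h3 : n = (n - 1) + 1 := by omega
  by_cases hdvd : c ∣ n
  · have : n / c = (n-1) / c + 1 := by rw [h3, Nat.succ_div, ← h3, if_pos hdvd]
    rw [this]; simp [hdvd]
  · have : n / c = (n-1) / c := by rw [h3, Nat.succ_div, ← h3, if_neg hdvd, add_zero]
    rw [this]; simp [hdvd]

lemma cyclotomic_dvd_qBinom {n d e : ℕ} (hn : 0 < n) (hd : d ∣ n) (he : e ∣ n)
    (hd2 : 2 ≤ d) (hnd : ¬ d ∣ e) : cyclotomic d ℚ ∣ qBinom n (n - e) := by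
  have he_le : e ≤ n := Nat.le_of_dvd hn he
  have hd_le : d ≤ n := Nat.le_of_dvd hn hd
  rw [qBinom_eq (Nat.sub_le n e)]
  have hmem : d ∈ Finset.Icc 2 n := by simp [hd2, hd_le]
  refine dvd_trans (dvd_pow_self _ ?_) (Finset.dvd_prod_of_mem _ hmem)
  have hne : n - (n - e) = e := by omega
  rw [hne]
  have hd0 : 0 < d := by omega
  set r := e % d with hrdef
  set s := (n - e) % d with hsdef
  have h1 := Nat.div_add_mod e d
  have h2 := Nat.div_add_mod (n - e) d
  have hr : r ≠ 0 := fun h => hnd (Nat.dvd_of_mod_eq_zero h)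
  have hrlt : r < d := Nat.mod_lt e hd0
  have hslt : s < d := Nat.mod_lt (n - e) hd0
  have hrs : d ∣ r + s := by
    have h3 : (r + s) % d = n % d := by
      rw [hrdef, hsdef, ← Nat.add_mod, Nat.add_sub_cancel' he_le]
    have h4 : n % d = 0 := by
      obtain ⟨N, hN⟩ := hd
      rw [hN]; exact Nat.mul_mod_right d N
    exact Nat.dvd_of_mod_eq_zero (h3.trans h4)
  have hrs_eq : r + s = d := by
    obtain ⟨k, hk⟩ := hrs
    have hk2 : k < 2 := by
      have : d * k < d * 2 := by rw [← hk]; omega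
      exact Nat.lt_of_mul_lt_mul_left this
    have hk1 : k ≠ 0 := by rintro rfl; omega
    have hk3 : k = 1 := by omega
    rw [hk3, mul_one] at hk
    omega
  obtain ⟨N, hN⟩ := hd
  have hNdiv : n / d = N := by rw [hN, Nat.mul_div_cancel_left _ hd0]
  have key : e / d + (n - e) / d + 1 = n / d := by
    refine Nat.eq_of_mul_eq_mul_left hd0 ?_
    have h5 : (d * (e / d) + r) + (d * ((n - e) / d) + s) = n := by rw [h1, h2]; omega
    have : d * (e / d) + d * ((n - e) / d) + d = n := by omega
    rw [Nat.mul_add, Nat.mul_add, mul_one, this, hNdiv, hN]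
  omega

lemma cyclotomic_dvd_X_pow_sub_one {d m : ℕ} (hd : 0 < d) (hdvd : d ∣ m) :
    cyclotomic d ℚ ∣ X ^ m - 1 := by
  rcases Nat.eq_zero_or_pos m with rfl | hm
  · simp
  · rw [← prod_cyclotomic_eq_X_pow_sub_one hm]
    exact Finset.dvd_prod_of_mem _ (Nat.mem_divisors.2 ⟨hdvd, hm.ne'⟩)

lemma isCoprime_cyclotomic_X_pow_sub_one {d k : ℕ} (hk : 0 < k) (hnd : ¬ d ∣ k) :
    IsCoprime (cyclotomic d ℚ) (X ^ k - 1) := by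
  rw [← prod_cyclotomic_eq_X_pow_sub_one hk]
  exact IsCoprime.prod_right fun c hc =>
    cyclotomic.isCoprime_rat fun h => hnd (h ▸ Nat.dvd_of_mem_divisors hc)

lemma isCoprime_cyclotomic_qBinom {n d : ℕ} (hn : 0 < n) (hd : d ∣ n) (hd0 : 0 < d) :
    IsCoprime (cyclotomic d ℚ) (qBinom n (n - d)) := by
  have hd_le : d ≤ n := Nat.le_of_dvd hn hd
  rw [qBinom_eq (Nat.sub_le n d)]
  refine IsCoprime.prod_right fun c hc => ?_
  by_cases hcd : c = d
  · subst hcd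
    have h1 : n - (n - c) = c := by omega
    obtain ⟨N, hN⟩ := hd
    have hN1 : N ≠ 0 := by rintro rfl; rw [Nat.mul_zero] at hN; omega
    obtain ⟨M, rfl⟩ : ∃ M, N = M + 1 := ⟨N - 1, by omega⟩
    have h2 : n / c = M + 1 := by rw [hN, Nat.mul_div_cancel_left _ hd0]
    have hnc : n - c = c * M := by rw [hN, Nat.mul_add, mul_one]; omega
    have h3 : (n - c) / c = M := by rw [hnc, Nat.mul_div_cancel_left _ hd0]
    have h4 : c / c = 1 := Nat.div_self hd0
    rw [h1, h2, h3, h4]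
    have h5 : M + 1 - M - 1 = 0 := by omega
    rw [h5, pow_zero]
    exact isCoprime_one_right
  · exact (cyclotomic.isCoprime_rat fun h => hcd h.symm).pow_right


section Helpers

lemma cyc_mem_idealId (d i : ℕ) : (aeval qv (cyclotomic d ℚ) : LaurentQT) ∈ idealId d i :=
  Ideal.subset_span (Set.mem_insert _ _)

lemma tgen_mem_idealId (d i : ℕ) : (qv ^ i * tv + 1 : LaurentQT) ∈ idealId d i :=
  Ideal.subset_span (Set.mem_insert_of_mem _ rfl)

lemma pow_sub_one_mem {i j : ℕ} (hij : i ≤ j) (J : Ideal LaurentQT)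
    (h1 : qv ^ i * tv + 1 ∈ J) (h2 : qv ^ j * tv + 1 ∈ J) : qv ^ (j - i) - 1 ∈ J := by
  have hp : qv ^ (j - i) * qv ^ i = qv ^ j := by rw [← pow_add]; congr 1; omega
  have he : qv ^ (j-i) - 1 = qv ^ (j-i) * (qv ^ i * tv + 1) - (qv ^ j * tv + 1) := by
    rw [← hp]; ring
  rw [he]; exact J.sub_mem (J.mul_mem_left _ h1) h2

lemma aeval_X_pow_sub_one (k : ℕ) :
    (aeval qv (X ^ k - 1 : Polynomial ℚ) : LaurentQT) = qv ^ k - 1 := by simp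

lemma eq_top_of_cyc_pow {d k : ℕ} (hk : 0 < k) (hnd : ¬ d ∣ k) {J : Ideal LaurentQT}
    (h1 : (aeval qv (cyclotomic d ℚ) : LaurentQT) ∈ J) (h2 : qv ^ k - 1 ∈ J) : J = ⊤ := by
  obtain ⟨a, b, hab⟩ := isCoprime_cyclotomic_X_pow_sub_one hk hnd
  rw [Ideal.eq_top_iff_one]
  have := congrArg (aeval qv (R := ℚ)) hab
  rw [map_add, map_mul, map_mul, map_one, aeval_X_pow_sub_one] at this
  rw [← this]
  exact J.add_mem (J.mul_mem_left _ h1) (J.mul_mem_left _ h2)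

lemma eq_top_of_two_cyc {d d' : ℕ} (hdd : d ≠ d') {J : Ideal LaurentQT}
    (h1 : (aeval qv (cyclotomic d ℚ) : LaurentQT) ∈ J)
    (h2 : (aeval qv (cyclotomic d' ℚ) : LaurentQT) ∈ J) : J = ⊤ := by
  obtain ⟨a, b, hab⟩ := cyclotomic.isCoprime_rat hdd
  rw [Ideal.eq_top_iff_one]
  have := congrArg (aeval qv (R := ℚ)) hab
  rw [map_add, map_mul, map_mul, map_one] at this
  rw [← this]
  exact J.add_mem (J.mul_mem_left _ h1) (J.mul_mem_left _ h2)

lemma comax_tt {d i i' : ℕ} (hi : i < d - 1) (hi' : i' < d - 1) (hne : i ≠ i') {J : Ideal LaurentQT}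
    (hc : (aeval qv (cyclotomic d ℚ) : LaurentQT) ∈ J)
    (h1 : qv ^ i * tv + 1 ∈ J) (h2 : qv ^ i' * tv + 1 ∈ J) : J = ⊤ := by
  rcases Nat.lt_or_ge i i' with h | h
  · exact eq_top_of_cyc_pow (k := i' - i) (by omega)
      (fun hdvd => by have := Nat.le_of_dvd (by omega) hdvd; omega)
      hc (pow_sub_one_mem (by omega) J h1 h2)
  · exact eq_top_of_cyc_pow (k := i - i') (by omega)
      (fun hdvd => by have := Nat.le_of_dvd (by omega) hdvd; omega)
      hc (pow_sub_one_mem (by omega) J h2 h1)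

lemma comax1 {d i d' i' : ℕ} (hi : i < d - 1) (hi' : i' < d' - 1)
    (hne : (d, i) ≠ (d', i')) : idealId d i ⊔ idealId d' i' = ⊤ := by
  by_cases hdd : d = d'
  · subst hdd
    have hii : i ≠ i' := fun h => hne (by rw [h])
    exact comax_tt hi hi' hii (Ideal.mem_sup_left (cyc_mem_idealId d i))
      (Ideal.mem_sup_left (tgen_mem_idealId d i)) (Ideal.mem_sup_right (tgen_mem_idealId d i'))
  · exact eq_top_of_two_cyc hdd (Ideal.mem_sup_left (cyc_mem_idealId d i))
      (Ideal.mem_sup_right (cyc_mem_idealId d' i'))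

lemma comax2 {n d i : ℕ} (hn : 0 < n) (hd : d ∣ n) (hi : i < d - 1) :
    idealId d i ⊔ Ideal.span {(qv ^ (n - 1) * tv + 1 : LaurentQT)} = ⊤ := by
  have hdn : d ≤ n := Nat.le_of_dvd hn hd
  have hk : 0 < n - 1 - i := by omega
  have hnd : ¬ d ∣ (n - 1 - i) := by
    intro hdvd
    have h1 : d ∣ n - (n - 1 - i) := Nat.dvd_sub hd hdvd
    have h2 : n - (n - 1 - i) = i + 1 := by omega
    rw [h2] at h1
    have := Nat.le_of_dvd (by omega) h1
    omega
  refine eq_top_of_cyc_pow hk hnd (Ideal.mem_sup_left (cyc_mem_idealId d i)) ?_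
  refine pow_sub_one_mem (by omega) _ (Ideal.mem_sup_left (tgen_mem_idealId d i)) ?_
  exact Ideal.mem_sup_right (Ideal.subset_span rfl)

end Helpers


noncomputable def Hd (d : ℕ) : LaurentQT := ∏ i ∈ Finset.range (d - 1), (qv ^ i * tv + 1)

noncomputable def he (n e : ℕ) : LaurentQT :=
  aeval qv (qBinom n (n - e)) * ∏ j ∈ Finset.Ico (n - e) (n - 1), (1 + tv * qv ^ j)

lemma qtBinom'_eq_he_mul {n e : ℕ} (hn : 0 < n) (he1 : 1 ≤ e) (hen : e ≤ n) :
    qtBinom' n (n - e) = he n e * (qv ^ (n - 1) * tv + 1) := by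
  have h1 : n = (n - 1) + 1 := by omega
  have h2 : n - e ≤ n - 1 := by omega
  rw [qtBinom', he]
  rw [show Finset.Ico (n - e) n = Finset.Ico (n - e) ((n - 1) + 1) from by rw [← h1]]
  rw [Finset.prod_Ico_succ_top h2]
  ring

lemma qv_pow_sub_one_eq {d m : ℕ} (hd : 0 < d) (hdvd : d ∣ m) :
    ∃ c : Polynomial ℚ, (qv : LaurentQT) ^ m - 1 = aeval qv (cyclotomic d ℚ) * aeval qv c := by
  obtain ⟨c, hc⟩ := cyclotomic_dvd_X_pow_sub_one hd hdvd
  exact ⟨c, by rw [← map_mul, ← hc, aeval_X_pow_sub_one]⟩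

lemma qtBinom'_mem_idealId {n d e i : ℕ} (hn : 0 < n) (hee : e ∣ n) (hd : d ∣ n)
    (hi : i < d - 1) : qtBinom' n (n - e) ∈ idealId d i := by
  have he0 : 0 < e := Nat.pos_of_dvd_of_pos hee hn
  have hen : e ≤ n := Nat.le_of_dvd hn hee
  have hd2 : 2 ≤ d := by omega
  by_cases hde : d ∣ e
  · -- use the factor 1 + tv * qv ^ (n - e + i)
    have hdle : d ≤ e := Nat.le_of_dvd he0 hde
    have hj0 : n - e + i ∈ Finset.Ico (n - e) n := by
      simp only [Finset.mem_Ico]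
      omega
    have hsplit : ∏ j ∈ Finset.Ico (n - e) n, (1 + tv * qv ^ j) =
        (1 + tv * qv ^ (n - e + i)) *
          ∏ j ∈ (Finset.Ico (n - e) n).erase (n - e + i), (1 + tv * qv ^ j) :=
      (Finset.mul_prod_erase _ _ hj0).symm
    have hmem : (1 + tv * qv ^ (n - e + i) : LaurentQT) ∈ idealId d i := by
      obtain ⟨c, hc⟩ := qv_pow_sub_one_eq (by omega : 0 < d)
        (Nat.dvd_sub hd hde : d ∣ n - e)
      refine Ideal.mem_span_pair.2 ⟨tv * qv ^ i * aeval qv c, 1, ?_⟩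
      have hp : (qv : LaurentQT) ^ (n - e) * qv ^ i = qv ^ (n - e + i) := by rw [← pow_add]
      linear_combination (tv * qv ^ i) * hc.symm + tv * hp
    have hrw : qtBinom' n (n - e) =
        (aeval qv (qBinom n (n - e)) *
          ∏ j ∈ (Finset.Ico (n - e) n).erase (n - e + i), (1 + tv * qv ^ j)) *
          (1 + tv * qv ^ (n - e + i)) := by
      rw [qtBinom', hsplit]; ring
    rw [hrw]
    exact Ideal.mul_mem_left _ _ hmem
  · obtain ⟨c, hc⟩ := cyclotomic_dvd_qBinom hn hd hee hd2 hde
    have hrw : qtBinom' n (n - e) =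
        (aeval qv c * ∏ j ∈ Finset.Ico (n - e) n, (1 + tv * qv ^ j)) *
          aeval qv (cyclotomic d ℚ) := by
      rw [qtBinom', hc, map_mul]; ring
    rw [hrw]
    exact Ideal.mul_mem_left _ _ (cyc_mem_idealId d i)

lemma qtBinom'_mem_U {n e : ℕ} (hn : 0 < n) (he1 : 1 ≤ e) (hen : e ≤ n) :
    qtBinom' n (n - e) ∈ Ideal.span {(qv ^ (n - 1) * tv + 1 : LaurentQT)} :=
  Ideal.mem_span_singleton.2 ⟨he n e, by rw [qtBinom'_eq_he_mul hn he1 hen]; ring⟩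

lemma mem_prod_of_comaximal {R : Type*} [CommRing R] {ι : Type*} (s : Finset ι)
    (f : ι → Ideal R) (hpair : ∀ i ∈ s, ∀ j ∈ s, i ≠ j → f i ⊔ f j = ⊤)
    {x : R} (hx : ∀ i ∈ s, x ∈ f i) : x ∈ ∏ i ∈ s, f i := by
  classical
  induction s using Finset.cons_induction with
  | empty => simp [Ideal.one_eq_top]
  | cons a s ha ih =>
    rw [Finset.prod_cons]
    have hsup : f a ⊔ ∏ i ∈ s, f i = ⊤ :=
      Ideal.sup_prod_eq_top fun j hj =>
        hpair a (Finset.mem_cons_self a s) j (Finset.mem_cons_of_mem hj)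
          (fun h => ha (h ▸ hj))
    rw [Ideal.mul_eq_inf_of_coprime hsup]
    exact ⟨hx a (Finset.mem_cons_self a s),
      ih (fun i hi j hj hij => hpair i (Finset.mem_cons_of_mem hi) j (Finset.mem_cons_of_mem hj) hij)
        (fun i hi => hx i (Finset.mem_cons_of_mem hi))⟩

lemma span_pair_mul_span_pair_le {R : Type*} [CommRing R] (φ a b : R) :
    Ideal.span {φ, a} * Ideal.span {φ, b} ≤ Ideal.span {φ, a * b} := by
  rw [Ideal.mul_le]
  intro r hr s hs
  obtain ⟨c1, c2, h1⟩ := Ideal.mem_span_pair.1 hr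
  obtain ⟨d1, d2, h2⟩ := Ideal.mem_span_pair.1 hs
  refine Ideal.mem_span_pair.2 ⟨c1 * d1 * φ + c1 * d2 * b + c2 * a * d1, c2 * d2, ?_⟩
  rw [← h1, ← h2]; ring

lemma prod_idealId_le {d : ℕ} :
    ∏ i ∈ Finset.range (d - 1), idealId d i ≤
      Ideal.span {(aeval qv (cyclotomic d ℚ) : LaurentQT), Hd d} := by
  rw [Hd]
  generalize d - 1 = k
  induction k with
  | zero =>
    simp only [Finset.range_zero, Finset.prod_empty]
    rw [Ideal.one_eq_top]
    have h : (1 : LaurentQT) ∈ Ideal.span {(aeval qv (cyclotomic d ℚ) : LaurentQT), 1} :=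
      Ideal.subset_span (Set.mem_insert_of_mem _ rfl)
    exact le_of_eq ((Ideal.eq_top_iff_one _).2 h).symm
  | succ k ih =>
    rw [Finset.prod_range_succ, Finset.prod_range_succ]
    exact le_trans (Ideal.mul_mono_left ih) (span_pair_mul_span_pair_le _ _ _)

lemma prod_ideal_le_of_mem {R : Type*} [CommRing R] {ι : Type*} {s : Finset ι}
    {f : ι → Ideal R} {d : ι} (hd : d ∈ s) : ∏ i ∈ s, f i ≤ f d := by
  classical
  rw [← Finset.mul_prod_erase _ _ hd]
  exact Ideal.mul_le.2 fun _ hx _ _ => (f d).mul_mem_right _ hx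


set_option maxHeartbeats 2000000 in
lemma forall_Ad_mem {n : ℕ} (hn : 0 < n) {f : LaurentQT}
    (hf : ∀ d ∈ n.divisors, f ∈ Ideal.span {(aeval qv (cyclotomic d ℚ) : LaurentQT), Hd d}) :
    f ∈ Ideal.span ((fun e => he n e) '' {e : ℕ | e ∣ n}) := by
  classical
  set Ih := Ideal.span ((fun e => he n e) '' {e : ℕ | e ∣ n}) with hIh
  have hmem_he : ∀ e, e ∣ n → he n e ∈ Ih := fun e hee => Ideal.subset_span ⟨e, hee, rfl⟩
  -- choose decomposition of f in each A_d
  have h1 : ∀ d : ℕ, ∃ u v : LaurentQT,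
      d ∈ n.divisors → u * (aeval qv (cyclotomic d ℚ)) + v * Hd d = f := by
    intro d
    by_cases hd : d ∈ n.divisors
    · obtain ⟨u, v, h⟩ := Ideal.mem_span_pair.1 (hf d hd); exact ⟨u, v, fun _ => h⟩
    · exact ⟨0, 0, fun h => absurd h hd⟩
  choose uu vv huv using h1
  -- Bezout for cyclotomic vs qBinom
  have h2 : ∀ d : ℕ, ∃ a b : Polynomial ℚ,
      d ∈ n.divisors → a * cyclotomic d ℚ + b * qBinom n (n - d) = 1 := by
    intro d
    by_cases hd : d ∈ n.divisors
    · obtain ⟨a, b, h⟩ := isCoprime_cyclotomic_qBinom hn (Nat.mem_divisors.1 hd).1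
        (Nat.pos_of_mem_divisors hd)
      exact ⟨a, b, fun _ => h⟩
    · exact ⟨0, 0, fun h => absurd h hd⟩
  choose aa bb hab using h2
  -- Bezout for cyclotomic vs product of the others
  have h3 : ∀ d : ℕ, ∃ v w : Polynomial ℚ,
      d ∈ n.divisors →
        v * (∏ d' ∈ n.divisors.erase d, cyclotomic d' ℚ) + w * cyclotomic d ℚ = 1 := by
    intro d
    by_cases hd : d ∈ n.divisors
    · have hcop : IsCoprime (∏ d' ∈ n.divisors.erase d, cyclotomic d' ℚ) (cyclotomic d ℚ) :=
        IsCoprime.prod_left fun d' hd' => cyclotomic.isCoprime_rat (Finset.ne_of_mem_erase hd')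
      obtain ⟨v, w, h⟩ := hcop
      exact ⟨v, w, fun _ => h⟩
    · exact ⟨0, 0, fun h => absurd h hd⟩
  choose cc ww hcw using h3
  set g := ∑ d ∈ n.divisors,
      (aeval qv (cc d * ∏ d' ∈ n.divisors.erase d, cyclotomic d' ℚ) * aeval qv (bb d) * vv d)
        * he n d with hg
  -- Step A : each cyclotomic divides f - g
  have stepA : ∀ d0 ∈ n.divisors, (aeval qv (cyclotomic d0 ℚ) : LaurentQT) ∣ f - g := by
    intro d0 hd0
    have hd0n : d0 ∣ n := (Nat.mem_divisors.1 hd0).1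
    have hd0p : 0 < d0 := Nat.pos_of_mem_divisors hd0
    have hd0le : d0 ≤ n := Nat.le_of_dvd hn hd0n
    set J := Ideal.span {(aeval qv (cyclotomic d0 ℚ) : LaurentQT)} with hJ
    set π := Ideal.Quotient.mk J with hπ
    have key : f - g ∈ J := by
      rw [← Ideal.Quotient.eq_zero_iff_mem]
      have kz : π (aeval qv (cyclotomic d0 ℚ)) = 0 :=
        Ideal.Quotient.eq_zero_iff_mem.2 (Ideal.subset_span rfl)
      have kq : π (qv ^ (n - d0)) = 1 := by
        obtain ⟨c, hc⟩ := qv_pow_sub_one_eq hd0p (Nat.dvd_sub hd0n dvd_rfl)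
        have h0 : π (qv ^ (n - d0) - 1) = 0 := by rw [hc, map_mul, kz]; ring
        rw [map_sub, map_one, sub_eq_zero] at h0
        exact h0
      have kH : π (∏ j ∈ Finset.Ico (n - d0) (n - 1), (1 + tv * qv ^ j)) = π (Hd d0) := by
        rw [Finset.prod_Ico_eq_prod_range]
        have hlen : n - 1 - (n - d0) = d0 - 1 := by omega
        rw [hlen, Hd, map_prod, map_prod]
        refine Finset.prod_congr rfl fun i _ => ?_
        have hrel : (1 + tv * qv ^ (n - d0 + i) : LaurentQT)
            = (qv ^ i * tv + 1) + (tv * qv ^ i) * (qv ^ (n - d0) - 1) := by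
          rw [pow_add]; ring
        rw [hrel, map_add, map_mul, map_sub, map_one, kq, sub_self]; ring
      have kf : π f = π (vv d0) * π (Hd d0) := by
        have h0 := huv d0 hd0
        rw [← h0, map_add, map_mul, map_mul, kz]; ring
      have kB : π (aeval qv (bb d0)) * π (aeval qv (qBinom n (n - d0))) = 1 := by
        have h0 := congrArg (aeval qv (R := ℚ)) (hab d0 hd0)
        rw [map_add, map_mul, map_mul, map_one] at h0
        have h1 := congrArg π h0
        rw [map_add, map_mul, map_mul, kz, map_one] at h1
        linear_combination h1
      have kψ : π (aeval qv (cc d0)) *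
          π (aeval qv (∏ d' ∈ n.divisors.erase d0, cyclotomic d' ℚ)) = 1 := by
        have h0 := congrArg (aeval qv (R := ℚ)) (hcw d0 hd0)
        rw [map_add, map_mul, map_mul, map_one] at h0
        have h1 := congrArg π h0
        rw [map_add, map_mul, map_mul, kz, map_one] at h1
        linear_combination h1
      have hzero : ∀ b ∈ n.divisors, b ≠ d0 →
          π ((aeval qv (cc b * ∏ d' ∈ n.divisors.erase b, cyclotomic d' ℚ)
            * aeval qv (bb b) * vv b) * he n b) = 0 := by
        intro b hb hbne
        have hd0mem : d0 ∈ n.divisors.erase b := Finset.mem_erase.2 ⟨hbne.symm, hd0⟩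
        have hψ : (∏ d' ∈ n.divisors.erase b, cyclotomic d' ℚ)
            = cyclotomic d0 ℚ * ∏ d' ∈ (n.divisors.erase b).erase d0, cyclotomic d' ℚ :=
          (Finset.mul_prod_erase _ _ hd0mem).symm
        rw [hψ]
        simp only [map_mul]
        rw [kz]
        ring
      have hgsum : π g = π (vv d0) * π (Hd d0) := by
        rw [hg, map_sum, Finset.sum_eq_single_of_mem d0 hd0 hzero, he]
        simp only [map_mul]
        rw [kH]
        linear_combination (π (vv d0) * π (Hd d0) * (π (aeval qv (cc d0)) *
            π (aeval qv (∏ d' ∈ n.divisors.erase d0, cyclotomic d' ℚ)))) * kB +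
          (π (vv d0) * π (Hd d0)) * kψ
      rw [map_sub, kf, hgsum, sub_self]
    exact Ideal.mem_span_singleton.1 key
  -- Step B : assemble
  have hpair : (↑n.divisors : Set ℕ).Pairwise
      (Function.onFun IsCoprime fun d => (aeval qv (cyclotomic d ℚ) : LaurentQT)) := by
    intro x _ y _ hxy
    obtain ⟨a, b, h⟩ := cyclotomic.isCoprime_rat hxy
    exact ⟨aeval qv a, aeval qv b, by rw [← map_mul, ← map_mul, ← map_add, h, map_one]⟩
  have hdvd_prod : (∏ d ∈ n.divisors, (aeval qv (cyclotomic d ℚ) : LaurentQT)) ∣ f - g :=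
    Finset.prod_dvd_of_coprime hpair stepA
  have hprod_eq : (∏ d ∈ n.divisors, (aeval qv (cyclotomic d ℚ) : LaurentQT)) = qv ^ n - 1 := by
    rw [← map_prod, prod_cyclotomic_eq_X_pow_sub_one hn, aeval_X_pow_sub_one]
  obtain ⟨r, hr⟩ := hdvd_prod
  rw [hprod_eq] at hr
  have hq1 : (qv : LaurentQT) ^ n - 1 = he n 1 * (qv - 1) := by
    rw [he, Finset.Ico_self, Finset.prod_empty, mul_one, qBinom_pred hn]
    have h0 := congrArg (aeval qv (R := ℚ)) (geom_sum_mul (X : Polynomial ℚ) n)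
    simp only [map_mul, map_sub, map_one, map_pow, aeval_X] at h0
    rw [qAnalog]
    exact h0.symm
  have hfinal : f = g + he n 1 * ((qv - 1) * r) := by linear_combination hr + r * hq1
  rw [hfinal]
  refine Ideal.add_mem _ ?_ (Ideal.mul_mem_right _ _ (hmem_he 1 (one_dvd n)))
  exact Ideal.sum_mem _ fun d hd =>
    Ideal.mul_mem_left _ _ (hmem_he d (Nat.mem_divisors.1 hd).1)

/-- The ideal `I(n)` generated by `[n choose n-d]'_{q,t}` for all divisors `d` of `n` equals
the product of the ideals `I_{i,d} = (φ_d(q), q^i t + 1)` over `d ∣ n`, `0 ≤ i ≤ d-2`,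
together with `I_{n-1} = (q^{n-1} t + 1)`; moreover all these ideals are pairwise
comaximal. -/
theorem stmt_11 (n : ℕ) (hn : 0 < n) :
    (Ideal.span ((fun d => qtBinom' n (n - d)) '' {d : ℕ | d ∣ n}) =
      (∏ d ∈ n.divisors, ∏ i ∈ Finset.range (d - 1), idealId d i) *
        Ideal.span {(qv ^ (n - 1) * tv + 1 : LaurentQT)}) ∧
    (∀ d ∈ n.divisors, ∀ d' ∈ n.divisors, ∀ i < d - 1, ∀ i' < d' - 1,
      (d, i) ≠ (d', i') → idealId d i ⊔ idealId d' i' = ⊤) ∧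
    (∀ d ∈ n.divisors, ∀ i < d - 1,
      idealId d i ⊔ Ideal.span {(qv ^ (n - 1) * tv + 1 : LaurentQT)} = ⊤) := by
  classical
  set U : Ideal LaurentQT := Ideal.span {(qv ^ (n - 1) * tv + 1 : LaurentQT)} with hU
  set K : Ideal LaurentQT := ∏ d ∈ n.divisors, ∏ i ∈ Finset.range (d - 1), idealId d i with hK
  set G : Set LaurentQT := (fun d => qtBinom' n (n - d)) '' {d : ℕ | d ∣ n} with hG
  refine ⟨?_, fun d _ d' _ i hi i' hi' hne => comax1 hi hi' hne,
    fun d hd i hi => comax2 hn (Nat.mem_divisors.1 hd).1 hi⟩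
  set σ : Finset ((_ : ℕ) × ℕ) := n.divisors.sigma (fun d => Finset.range (d - 1)) with hσ
  have hKs : K = ∏ p ∈ σ, idealId p.1 p.2 := Finset.prod_sigma' _ _ _
  have hmemσ : ∀ p ∈ σ, p.1 ∈ n.divisors ∧ p.2 < p.1 - 1 := by
    intro p hp
    obtain ⟨h1, h2⟩ := Finset.mem_sigma.1 hp
    exact ⟨h1, Finset.mem_range.1 h2⟩
  have hpairσ : ∀ p ∈ σ, ∀ q ∈ σ, p ≠ q → idealId p.1 p.2 ⊔ idealId q.1 q.2 = ⊤ := by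
    intro p hp q hq hne
    obtain ⟨hp1, hp2⟩ := hmemσ p hp
    obtain ⟨hq1, hq2⟩ := hmemσ q hq
    refine comax1 hp2 hq2 fun h => hne ?_
    obtain ⟨h1, h2⟩ := Prod.mk.inj h
    exact Sigma.ext h1 (heq_of_eq h2)
  have hsupUK : U ⊔ K = ⊤ := by
    rw [hKs]
    exact Ideal.sup_prod_eq_top fun p hp => by
      rw [sup_comm]
      exact comax2 hn (Nat.mem_divisors.1 (hmemσ p hp).1).1 (hmemσ p hp).2
  have hKU : K * U = K ⊓ U := Ideal.mul_eq_inf_of_coprime (by rwa [sup_comm] at hsupUK)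
  apply le_antisymm
  · rw [Ideal.span_le, hKU]
    rintro x ⟨e, (hee : e ∣ n), rfl⟩
    have he1 : 1 ≤ e := Nat.pos_of_dvd_of_pos hee hn
    have hen : e ≤ n := Nat.le_of_dvd hn hee
    refine Submodule.mem_inf.2 ⟨?_, qtBinom'_mem_U hn he1 hen⟩
    rw [hKs]
    exact mem_prod_of_comaximal _ _ hpairσ fun p hp =>
      qtBinom'_mem_idealId hn hee (Nat.mem_divisors.1 (hmemσ p hp).1).1 (hmemσ p hp).2
  · have hKIh : K ≤ Ideal.span ((fun e => he n e) '' {e : ℕ | e ∣ n}) := by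
      intro x hx
      refine forall_Ad_mem hn fun d hd => ?_
      exact prod_idealId_le (prod_ideal_le_of_mem hd hx)
    refine le_trans (Ideal.mul_mono_left hKIh) ?_
    rw [hU, Ideal.span_mul_span']
    rw [Ideal.span_le]
    rintro x hx
    rw [Set.mul_singleton] at hx
    obtain ⟨y, ⟨e, (hee : e ∣ n), rfl⟩, rfl⟩ := hx
    have he1 : 1 ≤ e := Nat.pos_of_dvd_of_pos hee hn
    have hen : e ≤ n := Nat.le_of_dvd hn hee
    refine Ideal.subset_span ⟨e, hee, ?_⟩
    show qtBinom' n (n - e) = he n e * (qv ^ (n - 1) * tv + 1)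
    exact qtBinom'_eq_he_mul hn he1 hen
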